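/- Let f be a bad binary string with index d₀ = B(f), and suppose α, β are p-critical words for Q_{d₀}(f) with differing coordinates i_1 < i_2 < ... < i_p, where each α_j = α + e_{i_j} contains f as a factor starting at position u_{i_j}. Then for every k ∈ {1,...,p} there exists j ∈ {1,...,p} \ {k} such that i_k lies in the interval [u_{i_j}, u_{i_j} + |f| - 1]. -/

import Mathlib

/-- `occursAt u f k` : the string `f` occurs in `u` starting at (0-based)
position `k`. -/
def occursAt {d m : ℕ} (u : Fin d → Bool) (f : Fin m → Bool) (k : ℕ) : Prop :=
  ∃ _h : k + m ≤ d, ∀ i : Fin m, u ⟨k + i.1, by have := i.2; omega⟩ = f i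

/-- `hasFactor u f` : `f` appears as a factor (consecutive bits) of `u`. -/
def hasFactor {d m : ℕ} (u : Fin d → Bool) (f : Fin m → Bool) : Prop :=
  ∃ k, occursAt u f k

/-- The `d`-dimensional hypercube `Q_d` on binary strings of length `d`. -/
def Qcube (d : ℕ) : SimpleGraph (Fin d → Bool) where
  Adj α β := hammingDist α β = 1
  symm := by constructor; intro a b h; exact (hammingDist_comm _ _).trans h
  loopless := by constructor; intro a h; simp at h

/-- The generalized Fibonacci cube `Q_d(f)`: the subgraph of `Q_d` induced on
the strings avoiding `f` as a factor. -/
def Qgraph (d : ℕ) {m : ℕ} (f : Fin m → Bool) :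
    SimpleGraph {u : Fin d → Bool // ¬ hasFactor u f} where
  Adj a b := hammingDist a.1 b.1 = 1
  symm := by constructor; intro a b h; exact (hammingDist_comm _ _).trans h
  loopless := by constructor; intro a h; simp at h

/-- `Q_d(f)` is an isometric subgraph of `Q_d`: internal distances equal
Hamming distances. -/
def IsIsometric (d : ℕ) {m : ℕ} (f : Fin m → Bool) : Prop :=
  ∀ a b : {u : Fin d → Bool // ¬ hasFactor u f},
    (Qgraph d f).dist a b = hammingDist a.1 b.1

/-- `f` is good: `Q_d(f)` is isometric in `Q_d` for all `d ≥ 1`. -/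
def Good {m : ℕ} (f : Fin m → Bool) : Prop := ∀ d, 1 ≤ d → IsIsometric d f

/-- `f` is bad: `Q_d(f)` is not isometric in `Q_d` for some `d ≥ 1`. -/
def Bad {m : ℕ} (f : Fin m → Bool) : Prop := ∃ d, 1 ≤ d ∧ ¬ IsIsometric d f

/-- The index `B(f)`: the smallest `d` with `Q_d(f)` not isometric in `Q_d`. -/
noncomputable def Bindex {m : ℕ} (f : Fin m → Bool) : ℕ :=
  sInf {d | ¬ IsIsometric d f}

/-- Flip the `i`-th bit of `α`. -/
def flipBit {d : ℕ} (α : Fin d → Bool) (i : Fin d) : Fin d → Bool :=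
  Function.update α i (!(α i))

/-- `α, β` are `p`-critical words for `Q_d(f)`. -/
def pCritical (d : ℕ) {m : ℕ} (f : Fin m → Bool) (p : ℕ)
    (α β : Fin d → Bool) : Prop :=
  ¬ hasFactor α f ∧ ¬ hasFactor β f ∧ hammingDist α β = p ∧ 2 ≤ p ∧
    ((∀ i, α i ≠ β i → hasFactor (flipBit α i) f) ∨
     (∀ i, α i ≠ β i → hasFactor (flipBit β i) f))

/- ----------------------------------------------------------------
   Auxiliary lemmas
---------------------------------------------------------------- -/

lemma hammingDist_eq_card {c : ℕ} (a b : Fin c → Bool) :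
    hammingDist a b = (Finset.filter (fun i => a i ≠ b i) Finset.univ).card := rfl

/-- Any walk in `Q_d(f)` is at least as long as the Hamming distance of its
endpoints. -/
lemma walk_hamming {c m : ℕ} {f : Fin m → Bool}
    {x y : {u : Fin c → Bool // ¬ hasFactor u f}} (p : (Qgraph c f).Walk x y) :
    hammingDist x.1 y.1 ≤ p.length := by
  induction p with
  | nil => simp
  | @cons x v y hadj q ih =>
      have h1 : hammingDist x.1 v.1 = 1 := hadj
      have htri := hammingDist_triangle x.1 v.1 y.1
      simp only [SimpleGraph.Walk.length_cons]
      omega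

/-- A word at Hamming distance 1 from `a` is a bit-flip of `a`. -/
lemma eq_flip_of_hammingDist_one {c : ℕ} {a w : Fin c → Bool}
    (h : hammingDist a w = 1) : ∃ s, a s ≠ w s ∧ w = flipBit a s := by
  have h' : (Finset.filter (fun i => a i ≠ w i) Finset.univ).card = 1 := h
  obtain ⟨s, hs⟩ := Finset.card_eq_one.mp h'
  have hmem : ∀ i : Fin c, (a i ≠ w i) ↔ i = s := by
    intro i
    rw [← Finset.mem_singleton, ← hs]
    simp
  refine ⟨s, (hmem s).mpr rfl, funext fun i => ?_⟩
  unfold flipBit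
  rw [Function.update_apply]
  by_cases hi : i = s
  · rw [if_pos hi]
    have hne : a i ≠ w i := (hmem i).mpr hi
    rw [hi] at hne ⊢
    cases h1 : a s <;> cases h2 : w s <;> simp_all
  · rw [if_neg hi]
    exact (not_not.mp (mt (hmem i).mp hi)).symm

/-- Flipping a bit where `a` and `b` agree increases the Hamming distance. -/
lemma hamming_flip_eq {c : ℕ} {a b : Fin c → Bool} {s : Fin c} (h : a s = b s) :
    hammingDist a b + 1 ≤ hammingDist (flipBit a s) b := by
  rw [hammingDist_eq_card, hammingDist_eq_card]
  have hsub : insert s (Finset.filter (fun i => a i ≠ b i) Finset.univ) ⊆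
      Finset.filter (fun i => flipBit a s i ≠ b i) Finset.univ := by
    intro i hi
    simp only [Finset.mem_insert, Finset.mem_filter, Finset.mem_univ, true_and] at hi ⊢
    unfold flipBit
    rcases hi with rfl | hi
    · rw [Function.update_self]
      cases hb : b i <;> simp_all
    · have hne : i ≠ s := by
        rintro rfl
        exact hi h
      rw [Function.update_of_ne hne]
      exact hi
  have hcard := Finset.card_le_card hsub
  have hnotmem : s ∉ Finset.filter (fun i => a i ≠ b i) Finset.univ := by
    simp [h]
  rw [Finset.card_insert_of_notMem hnotmem] at hcard
  omega

/-- Compatibility of `flipBit` with reindexing along an injection. -/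
lemma flipBit_comp {d c : ℕ} (α : Fin d → Bool) (g : Fin c → Fin d)
    (hg : Function.Injective g) (s t : Fin c) :
    flipBit (fun x => α (g x)) s t = flipBit α (g s) (g t) := by
  unfold flipBit
  rw [Function.update_apply, Function.update_apply]
  by_cases hts : t = s
  · subst hts
    rw [if_pos rfl, if_pos rfl]
  · rw [if_neg hts, if_neg fun hh => hts (hg hh)]

/-- From a "blocked pair" (all flips of `a` towards `b` contain `f`) one gets
non-isometry. -/
lemma not_isometric_of_blocked {c m : ℕ} {f : Fin m → Bool}
    {a b : Fin c → Bool} (ha : ¬ hasFactor a f) (hb : ¬ hasFactor b f)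
    (hne : ∃ s, a s ≠ b s)
    (hflip : ∀ s, a s ≠ b s → hasFactor (flipBit a s) f) :
    ¬ IsIsometric c f := by
  intro hiso
  obtain ⟨s₀, hs₀⟩ := hne
  have hab : a ≠ b := fun h => hs₀ (congrFun h s₀)
  have hq : 1 ≤ hammingDist a b := hammingDist_pos.mpr hab
  have hd' : (Qgraph c f).dist ⟨a, ha⟩ ⟨b, hb⟩ = hammingDist a b :=
    hiso ⟨a, ha⟩ ⟨b, hb⟩
  obtain ⟨p, hp⟩ := SimpleGraph.exists_walk_of_dist_ne_zero
    (G := Qgraph c f) (u := ⟨a, ha⟩) (v := ⟨b, hb⟩) (by omega)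
  rw [hd'] at hp
  have hnotnil : ¬ p.Nil :=
    SimpleGraph.Walk.not_nil_iff_lt_length.mpr (by omega)
  obtain ⟨w, hadj, q, rfl⟩ := SimpleGraph.Walk.not_nil_iff.mp hnotnil
  have hlen : q.length + 1 = hammingDist a b := by
    simpa [SimpleGraph.Walk.length_cons] using hp
  have hql : hammingDist w.1 b ≤ q.length := walk_hamming q
  have h1 : hammingDist a w.1 = 1 := hadj
  obtain ⟨s, hsne, hws⟩ := eq_flip_of_hammingDist_one h1
  have hsb : a s ≠ b s := by
    intro hsb
    have hflipge := hamming_flip_eq (a := a) (b := b) (s := s) hsb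
    rw [← hws] at hflipge
    omega
  exact w.2 (by rw [hws]; exact hflip s hsb)

/-- Lemma 3.1: for `p`-critical words `α, β` for `Q_{B(f)}(f)`, every differing
coordinate `k` lies in the occurrence interval `[u_j, u_j + |f| - 1]` of the
copy of `f` created by flipping some other differing coordinate `j`. -/
theorem stmt_7 (m : ℕ) (f : Fin m → Bool) (hBad : Bad f)
    (d₀ : ℕ) (hd₀ : d₀ = Bindex f) (p : ℕ) (α β : Fin d₀ → Bool)
    (hα : ¬ hasFactor α f) (hβ : ¬ hasFactor β f)
    (hH : hammingDist α β = p) (hp : 2 ≤ p)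
    (u : Fin d₀ → ℕ)
    (hu : ∀ i, α i ≠ β i → occursAt (flipBit α i) f (u i)) :
    ∀ k : Fin d₀, α k ≠ β k →
      ∃ j : Fin d₀, α j ≠ β j ∧ j ≠ k ∧ u j ≤ k.1 ∧ k.1 < u j + m := by
  intro k hk
  by_contra hcon
  -- every occurrence window contains the flipped coordinate
  have hwin : ∀ j : Fin d₀, α j ≠ β j → u j ≤ j.1 ∧ j.1 < u j + m := by
    intro j hj
    obtain ⟨hle, hocc⟩ := hu j hj
    by_contra hcontra
    apply hα
    refine ⟨u j, hle, fun i => ?_⟩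
    have hne2 : (⟨u j + i.1, by have := i.2; omega⟩ : Fin d₀) ≠ j := by
      intro hh
      have h3 := congrArg Fin.val hh
      have h3' : u j + i.1 = j.1 := h3
      have hi2 := i.2
      omega
    rw [← hocc i]
    show α _ = Function.update α j (!(α j)) _
    rw [Function.update_of_ne hne2]
  have hbound : ∀ j : Fin d₀, α j ≠ β j → u j + m ≤ d₀ := by
    intro j hj
    obtain ⟨hle, _⟩ := hu j hj
    exact hle
  have hside : ∀ j : Fin d₀, α j ≠ β j → j ≠ k → k.1 < u j ∨ u j + m ≤ k.1 := by
    intro j hj hjk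
    by_contra hc2
    push_neg at hc2
    exact hcon ⟨j, hj, hjk, by omega, by omega⟩
  -- a second differing coordinate
  have hcard : 2 ≤ (Finset.filter (fun i => α i ≠ β i) Finset.univ).card := by
    have hc : hammingDist α β =
        (Finset.filter (fun i => α i ≠ β i) Finset.univ).card := rfl
    omega
  obtain ⟨j₀, hj₀mem, hj₀k⟩ :=
    Finset.exists_mem_ne
      (s := Finset.filter (fun i => α i ≠ β i) Finset.univ) (by omega) k
  have hj₀ : α j₀ ≠ β j₀ := by
    simpa using hj₀mem
  rcases hside j₀ hj₀ hj₀k with hR | hL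
  · -- `j₀` lies to the right of `k` : use the suffix starting at `k+1`
    have hwj₀ := hwin j₀ hj₀
    set o : ℕ := k.1 + 1 with ho
    set c : ℕ := d₀ - o with hc
    have hod : o ≤ d₀ := k.2
    have hcd : c < d₀ := by omega
    set g : Fin c → Fin d₀ := fun x => ⟨o + x.1, by omega⟩ with hg
    have hginj : Function.Injective g := by
      intro x y hxy
      have h2 := congrArg Fin.val hxy
      have h3 : o + x.1 = o + y.1 := h2
      exact Fin.ext (by omega)
    have hkey : ∀ s : Fin c, α (g s) ≠ β (g s) → o ≤ u (g s) := by
      intro s hs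
      have hwj := hwin (g s) hs
      have hgs : (g s).1 = o + s.1 := rfl
      have hjk : g s ≠ k := by
        intro hh
        have h2' := congrArg Fin.val hh
        have h2 : (g s).1 = k.1 := h2' 
        rw [hgs] at h2
        omega
      rcases hside (g s) hs hjk with h1 | h2
      · omega
      · exfalso
        rw [hgs] at hwj
        omega
    have hni : ¬ IsIsometric c f := by
      refine not_isometric_of_blocked (f := f)
        (a := fun x => α (g x)) (b := fun x => β (g x)) ?_ ?_ ?_ ?_
      · rintro ⟨v, hvm, hvv⟩
        apply hα
        refine ⟨o + v, by omega, fun i => ?_⟩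
        have h4 : α (g ⟨v + i.1, by have := i.2; omega⟩) = f i := hvv i
        have h5 : (⟨o + v + i.1, by have := i.2; omega⟩ : Fin d₀) =
            g ⟨v + i.1, by have := i.2; omega⟩ := by
          apply Fin.ext
          show o + v + i.1 = o + (v + i.1)
          omega
        rw [h5]
        exact h4
      · rintro ⟨v, hvm, hvv⟩
        apply hβ
        refine ⟨o + v, by omega, fun i => ?_⟩
        have h4 : β (g ⟨v + i.1, by have := i.2; omega⟩) = f i := hvv i
        have h5 : (⟨o + v + i.1, by have := i.2; omega⟩ : Fin d₀) =
            g ⟨v + i.1, by have := i.2; omega⟩ := by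
          apply Fin.ext
          show o + v + i.1 = o + (v + i.1)
          omega
        rw [h5]
        exact h4
      · refine ⟨⟨j₀.1 - o, by omega⟩, ?_⟩
        have h5 : g ⟨j₀.1 - o, by omega⟩ = j₀ := by
          apply Fin.ext
          show o + (j₀.1 - o) = j₀.1
          omega
        show α (g _) ≠ β (g _)
        rw [h5]
        exact hj₀
      · intro s hs
        have hs' : α (g s) ≠ β (g s) := hs
        have hos := hkey s hs'
        have hbs := hbound (g s) hs'
        obtain ⟨hle, hocc⟩ := hu (g s) hs'
        refine ⟨u (g s) - o, ⟨by omega, fun i => ?_⟩⟩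
        rw [flipBit_comp α g hginj]
        have h5 : g ⟨u (g s) - o + i.1, by have := i.2; omega⟩ =
            (⟨u (g s) + i.1, by have := i.2; omega⟩ : Fin d₀) := by
          apply Fin.ext
          show o + (u (g s) - o + i.1) = u (g s) + i.1
          omega
        rw [h5]
        exact hocc i
    have hmem2 : c ∈ {d | ¬ IsIsometric d f} := hni
    have hle2 : Bindex f ≤ c := Nat.sInf_le hmem2
    omega
  · -- `j₀` lies to the left of `k` : use the prefix of length `k`
    have hwj₀ := hwin j₀ hj₀
    set c : ℕ := k.1 with hc
    have hcd : c < d₀ := k.2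
    set g : Fin c → Fin d₀ := fun x => ⟨x.1, by omega⟩ with hg
    have hginj : Function.Injective g := by
      intro x y hxy
      have h2 := congrArg Fin.val hxy
      have h3 : x.1 = y.1 := h2
      exact Fin.ext h3
    have hkey : ∀ s : Fin c, α (g s) ≠ β (g s) → u (g s) + m ≤ c := by
      intro s hs
      have hwj := hwin (g s) hs
      have hgs : (g s).1 = s.1 := rfl
      have hjk : g s ≠ k := by
        intro hh
        have h2' := congrArg Fin.val hh
        have h2 : (g s).1 = k.1 := h2' 
        rw [hgs] at h2
        have hs2 := s.2
        omega
      rcases hside (g s) hs hjk with h1 | h2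
      · exfalso
        rw [hgs] at hwj
        have hs2 := s.2
        omega
      · omega
    have hni : ¬ IsIsometric c f := by
      refine not_isometric_of_blocked (f := f)
        (a := fun x => α (g x)) (b := fun x => β (g x)) ?_ ?_ ?_ ?_
      · rintro ⟨v, hvm, hvv⟩
        apply hα
        refine ⟨v, by omega, fun i => ?_⟩
        have h4 : α (g ⟨v + i.1, by have := i.2; omega⟩) = f i := hvv i
        have h5 : (⟨v + i.1, by have := i.2; omega⟩ : Fin d₀) =
            g ⟨v + i.1, by have := i.2; omega⟩ := by
          apply Fin.ext
          show v + i.1 = v + i.1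
          rfl
        rw [h5]
        exact h4
      · rintro ⟨v, hvm, hvv⟩
        apply hβ
        refine ⟨v, by omega, fun i => ?_⟩
        have h4 : β (g ⟨v + i.1, by have := i.2; omega⟩) = f i := hvv i
        have h5 : (⟨v + i.1, by have := i.2; omega⟩ : Fin d₀) =
            g ⟨v + i.1, by have := i.2; omega⟩ := by
          apply Fin.ext
          show v + i.1 = v + i.1
          rfl
        rw [h5]
        exact h4
      · have hj₀c : j₀.1 < c := by omega
        refine ⟨⟨j₀.1, hj₀c⟩, ?_⟩
        have h5 : g ⟨j₀.1, hj₀c⟩ = j₀ := by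
          apply Fin.ext
          show j₀.1 = j₀.1
          rfl
        show α (g _) ≠ β (g _)
        rw [h5]
        exact hj₀
      · intro s hs
        have hs' : α (g s) ≠ β (g s) := hs
        have hcs := hkey s hs'
        obtain ⟨hle, hocc⟩ := hu (g s) hs'
        refine ⟨u (g s), ⟨by omega, fun i => ?_⟩⟩
        rw [flipBit_comp α g hginj]
        have h5 : g ⟨u (g s) + i.1, by have := i.2; omega⟩ =
            (⟨u (g s) + i.1, by have := i.2; omega⟩ : Fin d₀) := by
          apply Fin.ext
          show u (g s) + i.1 = u (g s) + i.1
          rfl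
        rw [h5]
        exact hocc i
    have hmem2 : c ∈ {d | ¬ IsIsometric d f} := hni
    have hle2 : Bindex f ≤ c := Nat.sInf_le hmem2
    omega
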